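/- arXiv:1309.7168 — 3 statements merged into one kernel-verified Lean document; each statement's English description precedes it below -/
import Mathlib

section
/- If μ(t) and A(t) satisfy μ'(t) = A(t)A(t)ᵀ J_μ and A'(t) = ½ (J_Σ − J_μ μ(t)ᵀ)ᵀ A(t), and if additionally Σ(t)(J_Σ − J_μ μ(t)ᵀ) is symmetric for all t where Σ(t) = A(t)A(t)ᵀ, then Σ'(t) = Σ(t) J_Σ − μ'(t) μ(t)ᵀ. -/
open Matrix

/-- GIGO-A implies GIGO-Σ: if `μ' = AAᵀ J_μ` and `A' = ½ (J_Σ − J_μ μᵀ)ᵀ A`, and if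
`Sig (J_Σ − J_μ μᵀ)` is symmetric where `Sig = AAᵀ`, then `Sig' = Sig J_Σ − μ' μᵀ`, i.e. the
derivative of `AAᵀ` is `A'Aᵀ + A(A')ᵀ = Sig J_Σ − μ' μᵀ`. -/
theorem gigoA_implies_gigoSigma
    (d : ℕ)
    (μ μ' : ℝ → Matrix (Fin d) (Fin 1) ℝ)
    (A A' : ℝ → Matrix (Fin d) (Fin d) ℝ)
    (Jμ : Matrix (Fin d) (Fin 1) ℝ) (JSig : Matrix (Fin d) (Fin d) ℝ)
    (hμdiff : ∀ (t : ℝ) (i : Fin d) (j : Fin 1),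
      HasDerivAt (fun s => μ s i j) (μ' t i j) t)
    (hAdiff : ∀ (t : ℝ) (i j : Fin d),
      HasDerivAt (fun s => A s i j) (A' t i j) t)
    (heqμ : ∀ t : ℝ, μ' t = A t * (A t)ᵀ * Jμ)
    (heqA : ∀ t : ℝ, A' t = (1 / 2 : ℝ) • ((JSig - Jμ * (μ t)ᵀ)ᵀ * A t))
    (hsymm : ∀ t : ℝ,
      (A t * (A t)ᵀ * (JSig - Jμ * (μ t)ᵀ))ᵀ = A t * (A t)ᵀ * (JSig - Jμ * (μ t)ᵀ)) :
    ∀ (t : ℝ) (i j : Fin d),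
      HasDerivAt (fun s => (A s * (A s)ᵀ) i j)
        ((A t * (A t)ᵀ * JSig - μ' t * (μ t)ᵀ) i j) t := by
  intro t i j
  have key : A' t * (A t)ᵀ + A t * (A' t)ᵀ = A t * (A t)ᵀ * JSig - μ' t * (μ t)ᵀ := by
    have hs := hsymm t
    set B := JSig - Jμ * (μ t)ᵀ with hB
    have h1 : A' t * (A t)ᵀ = (1 / 2 : ℝ) • (A t * (A t)ᵀ * B) := by
      rw [heqA t, ← hB, smul_mul_assoc, mul_assoc,
        show Bᵀ * (A t * (A t)ᵀ) = (A t * (A t)ᵀ * B)ᵀ by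
          rw [transpose_mul, transpose_mul, transpose_transpose], hs]
    have h2 : A t * (A' t)ᵀ = (1 / 2 : ℝ) • (A t * (A t)ᵀ * B) := by
      rw [heqA t, ← hB, transpose_smul, transpose_mul, transpose_transpose, mul_smul_comm,
        mul_assoc]
    rw [h1, h2, ← add_smul]
    norm_num
    rw [hB, mul_sub, heqμ t]
    simp only [Matrix.mul_assoc]
  have hderiv : HasDerivAt (fun s => ∑ k, A s i k * A s j k)
      (∑ k, (A' t i k * A t j k + A t i k * A' t j k)) t :=
    HasDerivAt.fun_sum fun k _ => (hAdiff t i k).mul (hAdiff t j k)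
  have hfun : (fun s => (A s * (A s)ᵀ) i j) = fun s => ∑ k, A s i k * A s j k := by
    funext s; simp [Matrix.mul_apply]
  have hval : (A t * (A t)ᵀ * JSig - μ' t * (μ t)ᵀ) i j
      = ∑ k, (A' t i k * A t j k + A t i k * A' t j k) := by
    rw [← key]
    simp [Matrix.add_apply, Matrix.mul_apply, Finset.sum_add_distrib]
  rw [hfun, hval]
  exact hderiv
end

section
/- The second-order Taylor expansion of the xNES covariance update: for Σ = AAᵀ invertible and v_Σ symmetric, the curve Σ_xNES(t) = A exp(t A⁻¹ v_Σ (A⁻¹)ᵀ) Aᵀ satisfies Σ_xNES(0) = Σ, Σ_xNES'(0) = v_Σ, and Σ_xNES''(0) = v_Σ Σ⁻¹ v_Σ. -/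
open Matrix

section aux
attribute [local instance] Matrix.linftyOpNormedAddCommGroup Matrix.linftyOpNormedRing
  Matrix.linftyOpNormedAlgebra

variable {d : ℕ}

noncomputable def entryCLM (d : ℕ) (i j : Fin d) : Matrix (Fin d) (Fin d) ℝ →L[ℝ] ℝ :=
  LinearMap.toContinuousLinearMap
    ((LinearMap.proj j).comp ((LinearMap.proj i).comp (Matrix.ofLinearEquiv ℝ).symm.toLinearMap))

lemma entry_hasDerivAt {F : ℝ → Matrix (Fin d) (Fin d) ℝ} {M : Matrix (Fin d) (Fin d) ℝ} {t : ℝ}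
    (h : HasDerivAt F M t) (i j : Fin d) :
    HasDerivAt (fun s : ℝ => F s i j) (M i j) t := by
  have := (entryCLM d i j).hasFDerivAt.comp_hasDerivAt t h
  exact this

set_option maxHeartbeats 1000000 in
lemma xnes_entry_hasDerivAt (A B C : Matrix (Fin d) (Fin d) ℝ) (t : ℝ) (i j : Fin d) :
    HasDerivAt (fun s : ℝ => (A * NormedSpace.exp (s • B) * C) i j)
      ((A * (NormedSpace.exp (t • B) * B) * C) i j) t :=
  entry_hasDerivAt (((hasDerivAt_exp_smul_const B t).const_mul A).mul_const C) i j

end aux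

/-- Second-order expansion of the xNES covariance update
`Σ_xNES(t) = A exp(t A⁻¹ v_Σ (A⁻¹)ᵀ) Aᵀ`: its value, first and second derivatives at `0`
are `Σ = AAᵀ`, `v_Σ`, and `v_Σ Σ⁻¹ v_Σ`. -/
theorem xnes_covariance_taylor
    (d : ℕ) (A vSig : Matrix (Fin d) (Fin d) ℝ)
    (hA : IsUnit A.det) (hv : vSigᵀ = vSig)
    (SigX : ℝ → Matrix (Fin d) (Fin d) ℝ)
    (hSigX : ∀ t : ℝ, SigX t = A * NormedSpace.exp (t • (A⁻¹ * vSig * (A⁻¹)ᵀ)) * Aᵀ) :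
    SigX 0 = A * Aᵀ ∧
    (∀ i j : Fin d, deriv (fun t => SigX t i j) 0 = vSig i j) ∧
    (∀ i j : Fin d, deriv (deriv (fun t => SigX t i j)) 0
      = (vSig * (A * Aᵀ)⁻¹ * vSig) i j) := by
  set B := A⁻¹ * vSig * (A⁻¹)ᵀ with hB
  have hAinv : A * A⁻¹ = 1 := Matrix.mul_nonsing_inv A hA
  have hAinv' : (A⁻¹)ᵀ * Aᵀ = 1 := by rw [← Matrix.transpose_mul, hAinv, Matrix.transpose_one]
  have key1 : A * B * Aᵀ = vSig := by
    rw [hB]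
    calc A * (A⁻¹ * vSig * (A⁻¹)ᵀ) * Aᵀ
        = (A * A⁻¹) * vSig * ((A⁻¹)ᵀ * Aᵀ) := by noncomm_ring
      _ = vSig := by rw [hAinv, hAinv', one_mul, mul_one]
  have key2 : A * B * (B * Aᵀ) = vSig * (A * Aᵀ)⁻¹ * vSig := by
    have hinv : (A * Aᵀ)⁻¹ = (A⁻¹)ᵀ * A⁻¹ := by
      rw [Matrix.mul_inv_rev, Matrix.transpose_nonsing_inv]
    rw [hinv, hB]
    calc A * (A⁻¹ * vSig * (A⁻¹)ᵀ) * (A⁻¹ * vSig * (A⁻¹)ᵀ * Aᵀ)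
        = (A * A⁻¹) * vSig * ((A⁻¹)ᵀ * A⁻¹) * vSig * ((A⁻¹)ᵀ * Aᵀ) := by noncomm_ring
      _ = vSig * ((A⁻¹)ᵀ * A⁻¹) * vSig := by rw [hAinv, hAinv', one_mul, mul_one]
  have hentry : ∀ t : ℝ, ∀ i j : Fin d,
      HasDerivAt (fun s : ℝ => SigX s i j)
        ((A * (NormedSpace.exp (t • B) * B) * Aᵀ) i j) t := by
    intro t i j
    have := xnes_entry_hasDerivAt A B Aᵀ t i j
    simp only [← hSigX] at this
    exact this
  have hderiv : ∀ i j : Fin d, deriv (fun s : ℝ => SigX s i j)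
      = fun t => (A * (NormedSpace.exp (t • B) * B) * Aᵀ) i j := by
    intro i j
    funext t
    exact (hentry t i j).deriv
  refine ⟨?_, ?_, ?_⟩
  · rw [hSigX, zero_smul, NormedSpace.exp_zero, mul_one]
  · intro i j
    rw [(hentry 0 i j).deriv, zero_smul, NormedSpace.exp_zero, one_mul, key1]
  · intro i j
    rw [hderiv i j]
    have h2 : HasDerivAt
        (fun t : ℝ => (A * (NormedSpace.exp (t • B) * B) * Aᵀ) i j)
        ((A * (NormedSpace.exp ((0:ℝ) • B) * B) * (B * Aᵀ)) i j) 0 := by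
      have := xnes_entry_hasDerivAt A B (B * Aᵀ) 0 i j
      simpa only [mul_assoc] using this
    rw [h2.deriv, zero_smul, NormedSpace.exp_zero, one_mul, ← key2, mul_assoc]
end

section
/- Let f(x) = e^{vx}(c² + d²)/(c² e^{2vx} + d²) with c, d > 0 and v > 0. Then f(0) = 1, f is strictly increasing on (0, x*] and strictly decreasing on [x*, ∞) where e^{vx*} = d/c, f(x) → 0 as x → ∞, and there is a unique x_cr > 0 with f(x_cr) = 1 when d > c, given by e^{v x_cr} = d²/c²; moreover f(x) > 1 for 0 < x < x_cr and f(x) < 1 for x > x_cr. -/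
open Filter Topology

private lemma gigo_cmp (c d : ℝ) {a b : ℝ} (ha : 0 < a) (hab : a < b)
    (h : a * b * c ^ 2 < d ^ 2) (hd : 0 < d) :
    a * (c ^ 2 + d ^ 2) / (c ^ 2 * a ^ 2 + d ^ 2) <
      b * (c ^ 2 + d ^ 2) / (c ^ 2 * b ^ 2 + d ^ 2) := by
  rw [div_lt_div_iff₀ (by positivity) (by positivity)]
  nlinarith [mul_pos (mul_pos (show (0:ℝ) < c ^ 2 + d ^ 2 by positivity)
    (sub_pos.2 hab)) (sub_pos.2 h)]

private lemma gigo_cmp' (c d : ℝ) {a b : ℝ} (ha : 0 < a) (hab : a < b)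
    (h : d ^ 2 < a * b * c ^ 2) (hd : 0 < d) :
    b * (c ^ 2 + d ^ 2) / (c ^ 2 * b ^ 2 + d ^ 2) <
      a * (c ^ 2 + d ^ 2) / (c ^ 2 * a ^ 2 + d ^ 2) := by
  rw [div_lt_div_iff₀ (by positivity) (by positivity)]
  nlinarith [mul_pos (mul_pos (show (0:ℝ) < c ^ 2 + d ^ 2 by positivity)
    (sub_pos.2 hab)) (sub_pos.2 h)]

/-- Properties of the per-step variance factor `f(x) = e^{vx}(c²+d²)/(c²e^{2vx}+d²)` of GIGO on
a linear function: `f(0) = 1`; `f` increases up to `x* = log(d/c)/v`, decreases afterwards,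
tends to `0` at `∞`; and when `d > c` there is a unique critical `x_cr > 0` with `f(x_cr) = 1`,
given by `e^{v x_cr} = d²/c²`, with `f > 1` before it and `f < 1` after it. -/
theorem gigo_linear_critical_step_size
    (c d v : ℝ) (hc : 0 < c) (hcd : c < d) (hv : 0 < v)
    (f : ℝ → ℝ)
    (hf : ∀ x : ℝ, f x = Real.exp (v * x) * (c ^ 2 + d ^ 2) /
                          (c ^ 2 * Real.exp (v * x) ^ 2 + d ^ 2))
    (xs xcr : ℝ) (hxs : xs = Real.log (d / c) / v) (hxcr : xcr = 2 * Real.log (d / c) / v) :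
    f 0 = 1 ∧
    Real.exp (v * xs) = d / c ∧
    StrictMonoOn f (Set.Icc 0 xs) ∧
    StrictAntiOn f (Set.Ici xs) ∧
    Tendsto f atTop (𝓝 0) ∧
    0 < xcr ∧
    Real.exp (v * xcr) = d ^ 2 / c ^ 2 ∧
    f xcr = 1 ∧
    (∀ x : ℝ, 0 < x → f x = 1 → x = xcr) ∧
    (∀ x : ℝ, 0 < x → x < xcr → 1 < f x) ∧
    (∀ x : ℝ, xcr < x → f x < 1) := by
  have hd : 0 < d := hc.trans hcd
  have hdc1 : 1 < d / c := (one_lt_div hc).2 hcd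
  have hlog : 0 < Real.log (d / c) := Real.log_pos hdc1
  -- exp(v*xs) = d/c
  have hexs : Real.exp (v * xs) = d / c := by
    rw [hxs, mul_div_cancel₀ _ hv.ne', Real.exp_log (by positivity)]
  have hxcrpos : 0 < xcr := by rw [hxcr]; positivity
  have hexcr : Real.exp (v * xcr) = d ^ 2 / c ^ 2 := by
    have : v * xcr = Real.log (d / c) + Real.log (d / c) := by
      rw [hxcr]; (field_simp; try ring)
    rw [this, Real.exp_add, Real.exp_log (by positivity), div_mul_div_comm, ← pow_two,
      ← pow_two]
  have hf0 : f 0 = 1 := by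
    rw [hf]; simp [div_self (show c ^ 2 + d ^ 2 ≠ 0 by positivity)]
  have hfcr : f xcr = 1 := by
    rw [hf, hexcr, div_eq_one_iff_eq (by positivity)]
    (field_simp; try ring)
  refine ⟨hf0, hexs, ?_, ?_, ?_, hxcrpos, hexcr, hfcr, ?_, ?_, ?_⟩
  · -- StrictMonoOn on [0, xs]
    intro x hx y hy hxy
    rw [hf x, hf y]
    have ha : 0 < Real.exp (v * x) := Real.exp_pos _
    have hab : Real.exp (v * x) < Real.exp (v * y) :=
      Real.exp_lt_exp.2 (by nlinarith [hxy])
    have hbd : Real.exp (v * y) ≤ d / c := by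
      rw [← hexs]; exact Real.exp_le_exp.2 (by nlinarith [hy.2])
    refine gigo_cmp c d ha hab ?_ hd
    have had : Real.exp (v * x) < d / c := lt_of_lt_of_le hab hbd
    have h1 : Real.exp (v * x) * Real.exp (v * y) < (d / c) * (d / c) :=
      mul_lt_mul had hbd (Real.exp_pos _) (by positivity)
    have h2 : (d / c) * (d / c) * c ^ 2 = d ^ 2 := by (field_simp; try ring)
    have h3 := mul_lt_mul_of_pos_right h1 (show (0:ℝ) < c ^ 2 by positivity)
    linarith
  · -- StrictAntiOn on [xs, ∞)
    intro x hx y hy hxy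
    rw [hf x, hf y]
    have ha : 0 < Real.exp (v * x) := Real.exp_pos _
    have hab : Real.exp (v * x) < Real.exp (v * y) :=
      Real.exp_lt_exp.2 (by nlinarith [hxy])
    have had : d / c ≤ Real.exp (v * x) := by
      rw [← hexs]; exact Real.exp_le_exp.2 (by nlinarith [Set.mem_Ici.1 hx])
    refine gigo_cmp' c d ha hab ?_ hd
    have h1 : d / c * (d / c) ≤ Real.exp (v * x) * Real.exp (v * x) :=
      mul_self_le_mul_self (by positivity) had
    have h2 : Real.exp (v * x) * Real.exp (v * x) < Real.exp (v * x) * Real.exp (v * y) :=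
      mul_lt_mul_of_pos_left hab ha
    have h3 : d / c * (d / c) * c ^ 2 = d ^ 2 := by (field_simp; try ring)
    have h4 := mul_lt_mul_of_pos_right (lt_of_le_of_lt h1 h2) (show (0:ℝ) < c ^ 2 by positivity)
    linarith
  · -- Tendsto f atTop (𝓝 0)
    have hexp : Tendsto (fun x => Real.exp (v * x)) atTop atTop :=
      Real.tendsto_exp_atTop.comp (Tendsto.const_mul_atTop hv tendsto_id)
    have hbound : Tendsto (fun x => (c ^ 2 + d ^ 2) / c ^ 2 * (Real.exp (v * x))⁻¹)
        atTop (𝓝 0) := by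
      have := (hexp.inv_tendsto_atTop).const_mul ((c ^ 2 + d ^ 2) / c ^ 2)
      simpa using this
    apply squeeze_zero (fun t => by rw [hf]; positivity) (fun t => ?_) hbound
    have heq : (c ^ 2 + d ^ 2) / c ^ 2 * (Real.exp (v * t))⁻¹ =
        (c ^ 2 + d ^ 2) / (c ^ 2 * Real.exp (v * t)) := by
      (field_simp; try ring)
    rw [hf, heq, div_le_div_iff₀ (by positivity) (by positivity)]
    nlinarith [mul_pos (mul_pos (pow_pos hd 2) (pow_pos hd 2))
      (inv_pos.2 (Real.exp_pos (v * t))), pow_pos hc 2, pow_pos hd 2,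
      Real.exp_pos (v * t), sq_nonneg d]
  · -- uniqueness
    intro x hx hfx
    set t := Real.exp (v * x) with hts
    have ht1 : 1 < t := by
      rw [hts, show (1:ℝ) = Real.exp 0 by simp]
      exact Real.exp_lt_exp.2 (mul_pos hv hx)
    rw [hf] at hfx
    rw [div_eq_one_iff_eq (by positivity)] at hfx
    have hfac : (t - 1) * (c ^ 2 * t - d ^ 2) = 0 := by linear_combination -hfx
    have ht : t = d ^ 2 / c ^ 2 := by
      rcases mul_eq_zero.1 hfac with h | h
      · linarith
      · (field_simp; try ring); linarith
    have : Real.exp (v * x) = Real.exp (v * xcr) := by rw [hexcr, ← hts, ht]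
    have := Real.exp_injective this
    exact mul_left_cancel₀ hv.ne' this
  · -- 1 < f x for 0 < x < xcr
    intro x hx0 hxcr'
    rw [hf, lt_div_iff₀ (by positivity)]
    set t := Real.exp (v * x) with hts
    have ht1 : 1 < t := by
      rw [hts, show (1:ℝ) = Real.exp 0 by simp]
      exact Real.exp_lt_exp.2 (mul_pos hv hx0)
    have ht2 : c ^ 2 * t < d ^ 2 := by
      have : t < d ^ 2 / c ^ 2 := by
        rw [← hexcr, hts]
        exact Real.exp_lt_exp.2 (mul_lt_mul_of_pos_left hxcr' hv)
      calc c ^ 2 * t < c ^ 2 * (d ^ 2 / c ^ 2) :=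
            mul_lt_mul_of_pos_left this (pow_pos hc 2)
        _ = d ^ 2 := by (field_simp; try ring)
    nlinarith [mul_pos (sub_pos.2 ht1) (sub_pos.2 ht2)]
  · -- f x < 1 for xcr < x
    intro x hxcr'
    rw [hf, div_lt_one (by positivity)]
    set t := Real.exp (v * x) with hts
    have ht1 : 1 < t := by
      rw [hts, show (1:ℝ) = Real.exp 0 by simp]
      exact Real.exp_lt_exp.2 (mul_pos hv (hxcrpos.trans hxcr'))
    have ht2 : d ^ 2 < c ^ 2 * t := by
      have : d ^ 2 / c ^ 2 < t := by
        rw [← hexcr, hts]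
        exact Real.exp_lt_exp.2 (mul_lt_mul_of_pos_left hxcr' hv)
      calc d ^ 2 = c ^ 2 * (d ^ 2 / c ^ 2) := by (field_simp; try ring)
        _ < c ^ 2 * t := mul_lt_mul_of_pos_left this (pow_pos hc 2)
    nlinarith [mul_pos (sub_pos.2 ht1) (sub_pos.2 ht2)]
end
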